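/- For every positive integer K, the product of factorials ∏_{k=0}^{K−1} k! is at least exp(K²·log(K)/2 − 3K²/4). -/

import Mathlib

open Real Finset

lemma sqrt_pi_le_stirlingSeq (n : ℕ) : Real.sqrt π ≤ Stirling.stirlingSeq (n + 1) := by
  have htend : Filter.Tendsto (Stirling.stirlingSeq ∘ Nat.succ) Filter.atTop
      (nhds (Real.sqrt π)) :=
    Stirling.tendsto_stirlingSeq_sqrt_pi.comp (Filter.tendsto_add_atTop_nat 1)
  exact Stirling.stirlingSeq'_antitone.le_of_tendsto htend n

lemma stirling_lb (n : ℕ) (hn : 0 < n) :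
    Real.sqrt π * (Real.sqrt (2 * n) * ((n : ℝ) / Real.exp 1) ^ n) ≤ (n.factorial : ℝ) := by
  obtain ⟨m, rfl⟩ := Nat.exists_eq_add_of_lt hn
  simp only [zero_add] at *
  have h := sqrt_pi_le_stirlingSeq m
  rw [Stirling.stirlingSeq] at h
  have hpos : 0 < Real.sqrt (2 * (m + 1 : ℕ)) * (((m + 1 : ℕ) : ℝ) / Real.exp 1) ^ (m + 1) := by
    positivity
  calc Real.sqrt π * (Real.sqrt (2 * (m + 1 : ℕ)) * (((m + 1 : ℕ) : ℝ) / Real.exp 1) ^ (m + 1))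
      ≤ ((m + 1).factorial : ℝ) / (Real.sqrt (2 * (m + 1 : ℕ)) * (((m + 1 : ℕ) : ℝ) / Real.exp 1) ^ (m + 1)) * (Real.sqrt (2 * (m + 1 : ℕ)) * (((m + 1 : ℕ) : ℝ) / Real.exp 1) ^ (m + 1)) :=
        mul_le_mul_of_nonneg_right h hpos.le
    _ = ((m + 1).factorial : ℝ) := div_mul_cancel₀ _ hpos.ne'

lemma stirling_exp_lb (n : ℕ) (hn : 0 < n) :
    Real.exp ((n : ℝ) * Real.log n - n + Real.log n / 2 + Real.log (2 * π) / 2)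
      ≤ (n.factorial : ℝ) := by
  refine le_trans (le_of_eq ?_) (stirling_lb n hn)
  have hn' : (0 : ℝ) < n := by exact_mod_cast hn
  have hP : (0 : ℝ) < Real.sqrt π * (Real.sqrt (2 * n) * ((n : ℝ) / Real.exp 1) ^ n) := by
    positivity
  rw [← Real.exp_log hP]
  congr 1
  have e1 : Real.log (Real.sqrt π) = Real.log π / 2 := Real.log_sqrt pi_pos.le
  have e2 : Real.log (Real.sqrt (2 * (n : ℝ))) = (Real.log 2 + Real.log n) / 2 := by
    rw [Real.log_sqrt (by positivity), Real.log_mul two_ne_zero hn'.ne']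
  have e3 : Real.log (((n : ℝ) / Real.exp 1) ^ n) = n * (Real.log n - 1) := by
    rw [Real.log_pow, Real.log_div hn'.ne' (Real.exp_ne_zero 1), Real.log_exp]
  have e4 : Real.log (2 * π) = Real.log 2 + Real.log π := Real.log_mul two_ne_zero pi_pos.ne'
  rw [e4, Real.log_mul (by positivity) (by positivity),
    Real.log_mul (by positivity) (by positivity), e1, e2, e3]
  ring

lemma log_two_pi_ge : (3 : ℝ) / 2 ≤ Real.log (2 * π) := by
  have he := Real.exp_one_lt_d9
  have h1 : Real.exp 1 ^ 3 < 20.1 := by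
    calc Real.exp 1 ^ 3 ≤ 2.7182818286 ^ 3 := pow_le_pow_left₀ (Real.exp_pos 1).le he.le 3
      _ < 20.1 := by norm_num
  have h2 : Real.exp (3 / 2) ^ 2 < 20.1 := by
    have : Real.exp (3 / 2) ^ 2 = Real.exp 3 := by rw [← Real.exp_nat_mul]; norm_num
    have h3 : Real.exp 3 = Real.exp 1 ^ 3 := by rw [← Real.exp_nat_mul]; norm_num
    rw [this, h3]; exact h1
  have h6 : Real.exp (3 / 2) ≤ 6 := by nlinarith [Real.exp_pos (3 / 2)]
  calc (3 : ℝ) / 2 = Real.log (Real.exp (3 / 2)) := (Real.log_exp _).symm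
    _ ≤ Real.log (2 * π) := Real.log_le_log (Real.exp_pos _) (by nlinarith [pi_gt_three])

theorem prod_factorial_lower_bound (K : ℕ) (hK : 0 < K) :
    Real.exp ((K : ℝ) ^ 2 * Real.log K / 2 - 3 * (K : ℝ) ^ 2 / 4)
      ≤ ∏ k ∈ Finset.range K, (Nat.factorial k : ℝ) := by
  induction K, hK using Nat.le_induction with
  | base =>
    simp only [Nat.cast_one, Finset.prod_range_one, Nat.factorial_zero, Nat.cast_one]
    rw [Real.exp_le_one_iff]
    norm_num [Real.log_one]
  | succ K hK ih =>
    rw [Finset.prod_range_succ]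
    have hK1 : (1 : ℝ) ≤ (K : ℝ) := by exact_mod_cast hK
    have hKpos : (0 : ℝ) < (K : ℝ) := by linarith
    have hcast : ((K + 1 : ℕ) : ℝ) = (K : ℝ) + 1 := by push_cast; ring
    rw [hcast]
    have hst := stirling_exp_lb K hK
    have hlog : Real.log ((K : ℝ) + 1) ≤ Real.log K + 1 / K := by
      have hd : Real.log ((K : ℝ) + 1) - Real.log K = Real.log (((K : ℝ) + 1) / K) := by
        rw [Real.log_div (by linarith) hKpos.ne']
      have h2 : Real.log (((K : ℝ) + 1) / K) ≤ ((K : ℝ) + 1) / K - 1 :=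
        Real.log_le_sub_one_of_pos (by positivity)
      have h3 : ((K : ℝ) + 1) / K - 1 = 1 / K := by field_simp; ring
      linarith
    have hltp := log_two_pi_ge
    have hA : ((K : ℝ) + 1) ^ 2 / 2 * Real.log ((K : ℝ) + 1)
        ≤ ((K : ℝ) + 1) ^ 2 / 2 * (Real.log K + 1 / K) :=
      mul_le_mul_of_nonneg_left hlog (by positivity)
    have hB : ((K : ℝ) + 1) ^ 2 / 2 * (Real.log K + 1 / K)
        = (K : ℝ) ^ 2 * Real.log K / 2 + K * Real.log K + Real.log K / 2
          + ((K : ℝ) / 2 + 1 + 1 / (2 * K)) := by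
      field_simp; ring
    have hC : 1 / (2 * (K : ℝ)) ≤ 1 / 2 := by
      apply div_le_div_of_nonneg_left one_pos.le (by linarith) (by linarith)
    have key : Real.exp (((K : ℝ) + 1) ^ 2 * Real.log ((K : ℝ) + 1) / 2 - 3 * ((K : ℝ) + 1) ^ 2 / 4)
        ≤ Real.exp ((K : ℝ) ^ 2 * Real.log K / 2 - 3 * (K : ℝ) ^ 2 / 4) *
          Real.exp ((K : ℝ) * Real.log K - K + Real.log K / 2 + Real.log (2 * π) / 2) := by
      rw [← Real.exp_add, Real.exp_le_exp]
      nlinarith [hA, hB, hC, hltp]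
    refine key.trans (mul_le_mul ih hst (Real.exp_pos _).le ?_)
    exact Finset.prod_nonneg fun i _ => by positivity
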